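/- (PAC bound on p-RSR) Let A and B be real-valued random variables on a common probability space with CDFs Φ_A and Φ_B, where Φ_A is continuous. Let {A_i}_{i=1}^n be i.i.d. samples with CDF Φ_A and {B_i}_{i=1}^n be i.i.d. samples with CDF Φ_B, with empirical CDFs Φ_A⁽ⁿ⁾ and Φ_B⁽ⁿ⁾. Let p ∈ (0,1), α ∈ (0,1), and ε(α,n) = √(ln(2/α)/(2n)). Then with probability at least 1 − 2α, the p-quantile relative scenario risk R(p) = P(B > Φ_A^{-1}(p) | A ≤ Φ_A^{-1}(p)) satisfies: 1 − min{p, v̄(p,α,n)}/p ≤ R(p) ≤ 1 − max{p + v̲(p,α,n) − 1, 0}/p, where v̲(p,α,n) = Φ_B⁽ⁿ⁾((Φ_A⁽ⁿ⁾ + ε(α,n))^{-1}(p)) − ε(α,n) and v̄(p,α,n) = Φ_B⁽ⁿ⁾((Φ_A⁽ⁿ⁾ − ε(α,n))^{-1}(p)) + ε(α,n). -/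

import Mathlib

open MeasureTheory

/-- The generalized inverse `H⁻¹(p) = inf {x : ℝ | H x ≥ p}` of a function `H : ℝ → ℝ`,
valued in the extended reals so that the convention `inf ∅ = +∞` holds. -/
noncomputable def geninvE (H : ℝ → ℝ) (p : ℝ) : EReal :=
  sInf ((fun x : ℝ => (x : EReal)) '' {x : ℝ | p ≤ H x})

/-- Evaluation of a (bounded, nondecreasing) function `H : ℝ → ℝ` at an extended real:
at a finite point it is `H` itself, at `-∞` it is `inf (range H)` and at `+∞` it is
`sup (range H)` (the natural monotone extension). -/
noncomputable def evalE (H : ℝ → ℝ) (x : EReal) : ℝ :=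
  if x = ⊥ then sInf (Set.range H) else if x = ⊤ then sSup (Set.range H) else H x.toReal

/-- The generalized inverse `H⁻¹(p) = inf {x : ℝ | H x ≥ p}` of a function
`H : ℝ → ℝ` (real-valued; for a CDF of a real random variable and `p ∈ (0,1)` the
infimum is over a nonempty set that is bounded below). -/
noncomputable def geninv (H : ℝ → ℝ) (p : ℝ) : ℝ :=
  sInf {x : ℝ | p ≤ H x}

/-- The empirical CDF of the samples `X 0, …, X (n-1)` evaluated at the outcome `ω` and
the point `x`: `Φ⁽ⁿ⁾(x) = (1/n) ∑_{i=1}^n 1[X i ≤ x]`. -/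
noncomputable def empCDF {Ω : Type*} (n : ℕ) (X : Fin n → Ω → ℝ) (ω : Ω) (x : ℝ) : ℝ :=
  (n : ℝ)⁻¹ * ∑ i : Fin n, if X i ω ≤ x then (1 : ℝ) else 0


section PRSRHelpers
open Real ProbabilityTheory Filter Topology


theorem bernoulli_mgf_le (m t : ℝ) (hm0 : 0 ≤ m) (hm1 : m ≤ 1) (ht : 0 ≤ t) :
    1 - m + m * exp t ≤ exp (t * m + t^2 / 8) := by
  set D : ℝ → ℝ := fun s => 1 - m + m * exp s with hD
  have hDpos : ∀ s, 0 < D s := by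
    intro s
    rcases eq_or_lt_of_le hm0 with h | h
    · simp [hD, ← h]
    · have := exp_pos s
      have : 0 < m * exp s := by positivity
      simp only [hD]; nlinarith
  have hD' : ∀ s, HasDerivAt D (m * exp s) s := fun s => by
    exact ((Real.hasDerivAt_exp s).const_mul m).const_add (1 - m)
  set L' : ℝ → ℝ := fun s => m * exp s / D s - m with hL'
  have hL'deriv : ∀ s, HasDerivAt L'
      ((m * exp s * D s - m * exp s * (m * exp s)) / (D s)^2) s := fun s => by
    exact (((Real.hasDerivAt_exp s).const_mul m).div (hD' s) (hDpos s).ne').sub_const m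
  have hL''le : ∀ s, (m * exp s * D s - m * exp s * (m * exp s)) / (D s)^2 ≤ 1/4 := by
    intro s
    rw [div_le_iff₀ (pow_pos (hDpos s) 2)]
    simp only [hD]
    nlinarith [sq_nonneg ((1 - m) - m * exp s), exp_pos s, mul_nonneg hm0 (exp_pos s).le]
  -- step 1 : L' s ≤ s / 4 for s ≥ 0
  have hf1 : ∀ s, HasDerivAt (fun s => s / 4 - L' s)
      (1 / 4 - (m * exp s * D s - m * exp s * (m * exp s)) / (D s)^2) s := fun s => by
    exact ((hasDerivAt_id s).div_const 4).sub (hL'deriv s)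
  have hf1mono : Monotone (fun s => s / 4 - L' s) := by
    apply monotone_of_deriv_nonneg
    · exact fun s => (hf1 s).differentiableAt
    · intro s
      rw [(hf1 s).deriv]
      linarith [hL''le s]
  have hL'le : ∀ s : ℝ, 0 ≤ s → L' s ≤ s / 4 := by
    intro s hs
    have h0 : (fun s => s / 4 - L' s) 0 = 0 := by simp [hL', hD]
    have := hf1mono hs
    rw [h0] at this
    linarith [this]
  -- step 2 : log (D t) ≤ m * t + t^2/8
  have hf2 : ∀ s, HasDerivAt (fun s => s^2 / 8 + m * s - log (D s))
      (s / 4 + m - m * exp s / D s) s := fun s => by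
    have h1 : HasDerivAt (fun s : ℝ => s^2 / 8) (s / 4) s := by
      have := (hasDerivAt_pow 2 s).div_const 8
      exact this.congr_deriv (by norm_num; ring)
    have h2 : HasDerivAt (fun s : ℝ => m * s) m s := by
      simpa using (hasDerivAt_id s).const_mul m
    have h3 : HasDerivAt (fun s => log (D s)) (m * exp s / D s) s :=
      (hD' s).log (hDpos s).ne'
    exact (h1.add h2).sub h3
  have hf2mono : MonotoneOn (fun s => s^2 / 8 + m * s - log (D s)) (Set.Ici 0) := by
    apply monotoneOn_of_deriv_nonneg (convex_Ici 0)
    · exact fun s _ => (hf2 s).differentiableAt.continuousAt.continuousWithinAt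
    · intro s _
      exact (hf2 s).differentiableAt.differentiableWithinAt
    · intro s hs
      rw [interior_Ici] at hs
      rw [(hf2 s).deriv]
      have := hL'le s (le_of_lt hs)
      simp only [hL'] at this
      linarith
  have hlog : log (D t) ≤ t * m + t^2 / 8 := by
    have h0 : (fun s => s^2 / 8 + m * s - log (D s)) 0 = 0 := by simp [hD]
    have := hf2mono (Set.self_mem_Ici) (Set.mem_Ici.mpr ht) ht
    rw [h0] at this
    nlinarith [this]
  calc D t = exp (log (D t)) := (exp_log (hDpos t)).symm
    _ ≤ exp (t * m + t^2 / 8) := exp_le_exp.mpr hlog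

theorem hoeffding_upper {Ω : Type*} [MeasurableSpace Ω] (μ : Measure Ω) [IsProbabilityMeasure μ]
    (n : ℕ) (X : Fin n → Ω → ℝ) (hmeas : ∀ i, Measurable (X i))
    (hindep : iIndepFun X μ)
    (hbd : ∀ i ω, X i ω ∈ Set.Icc (0:ℝ) 1) (ε : ℝ) (hε : 0 ≤ ε) :
    μ {ω | (∑ i, ∫ ω', X i ω' ∂μ) + n * ε ≤ ∑ i, X i ω} ≤
      ENNReal.ofReal (Real.exp (-2 * n * ε^2)) := by
  set t : ℝ := 4 * ε with htdef
  have ht : 0 ≤ t := by positivity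
  set m : Fin n → ℝ := fun i => ∫ ω', X i ω' ∂μ with hmdef
  have hXint : ∀ i, Integrable (X i) μ := by
    intro i
    refine Integrable.mono' (integrable_const 1) (hmeas i).aestronglyMeasurable
      (ae_of_all _ fun ω => ?_)
    rw [Real.norm_of_nonneg (hbd i ω).1]; exact (hbd i ω).2
  have hm0 : ∀ i, 0 ≤ m i := fun i =>
    integral_nonneg fun ω => (hbd i ω).1
  have hm1 : ∀ i, m i ≤ 1 := by
    intro i
    have h := integral_mono (μ := μ) (hXint i) (integrable_const (1:ℝ))
      (fun ω => (hbd i ω).2)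
    simpa using h
  have hint : ∀ i, Integrable (fun ω => exp (t * X i ω)) μ := by
    intro i
    refine Integrable.mono' (integrable_const (exp t)) ((hmeas i).const_mul t).exp.aestronglyMeasurable
      (ae_of_all _ fun ω => ?_)
    rw [Real.norm_of_nonneg (exp_pos _).le, exp_le_exp]
    calc t * X i ω ≤ t * 1 := by
          exact mul_le_mul_of_nonneg_left (hbd i ω).2 ht
      _ = t := mul_one t
  have hmgf : ∀ i, mgf (X i) μ t ≤ exp (t * m i + t^2 / 8) := by
    intro i
    have hpt : ∀ ω, exp (t * X i ω) ≤ 1 - X i ω + X i ω * exp t := by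
      intro ω
      have hx0 := (hbd i ω).1
      have hx1 := (hbd i ω).2
      have := convexOn_exp.2 (Set.mem_univ (0:ℝ)) (Set.mem_univ t)
        (by linarith : (0:ℝ) ≤ 1 - X i ω) hx0 (by ring)
      simp only [smul_eq_mul, mul_zero, exp_zero, mul_one] at this
      calc exp (t * X i ω) = exp ((1 - X i ω) * 0 + X i ω * t) := by ring_nf
        _ ≤ (1 - X i ω) * 1 + X i ω * exp t := by
            simpa [mul_comm] using this
        _ = 1 - X i ω + X i ω * exp t := by ring
    have hrint : Integrable (fun ω => 1 - X i ω + X i ω * exp t) μ :=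
      ((integrable_const 1).sub (hXint i)).add ((hXint i).mul_const (exp t))
    calc mgf (X i) μ t = ∫ ω, exp (t * X i ω) ∂μ := rfl
      _ ≤ ∫ ω, (1 - X i ω + X i ω * exp t) ∂μ :=
          integral_mono (hint i) hrint hpt
      _ = 1 - m i + m i * exp t := by
          have h1 : Integrable (fun ω => 1 - X i ω) μ := (integrable_const 1).sub (hXint i)
          have h2 : Integrable (fun ω => X i ω * exp t) μ := (hXint i).mul_const (exp t)
          rw [integral_add h1 h2, integral_mul_const, integral_sub (integrable_const 1) (hXint i)]
          simp [hmdef]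
      _ ≤ exp (t * m i + t^2 / 8) := bernoulli_mgf_le (m i) t (hm0 i) (hm1 i) ht
  have hchern := measure_ge_le_exp_mul_mgf (μ := μ) (X := ∑ i, X i)
    ((∑ i, m i) + n * ε) ht (hindep.integrable_exp_mul_sum hmeas (fun i _ => hint i))
  have hprod : mgf (∑ i, X i) μ t ≤ exp (t * (∑ i, m i) + n * (t^2 / 8)) := by
    rw [hindep.mgf_sum hmeas]
    calc ∏ i, mgf (X i) μ t ≤ ∏ i, exp (t * m i + t^2 / 8) :=
          Finset.prod_le_prod (fun i _ => mgf_nonneg) (fun i _ => hmgf i)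
      _ = exp (∑ i, (t * m i + t^2 / 8)) := (Real.exp_sum _ _).symm
      _ = exp (t * (∑ i, m i) + n * (t^2 / 8)) := by
          rw [Finset.sum_add_distrib, Finset.mul_sum, Finset.sum_const]
          simp [nsmul_eq_mul]
  have hfin : exp (-t * ((∑ i, m i) + n * ε)) * exp (t * (∑ i, m i) + n * (t^2 / 8))
      = exp (-2 * n * ε^2) := by
    rw [← Real.exp_add]
    congr 1
    simp only [htdef]
    ring
  rw [ENNReal.le_ofReal_iff_toReal_le (measure_ne_top μ _) (exp_pos _).le]
  calc (μ {ω | (∑ i, m i) + ↑n * ε ≤ ∑ i, X i ω}).toReal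
      = (μ {ω | (∑ i, m i) + ↑n * ε ≤ (∑ i, X i) ω}).toReal := by
        have hseteq : {ω | (∑ i, m i) + ↑n * ε ≤ ∑ i, X i ω} =
            {ω | (∑ i, m i) + ↑n * ε ≤ (∑ i, X i) ω} := by
          ext ω; simp [Finset.sum_apply]
        rw [hseteq]
    _ ≤ exp (-t * ((∑ i, m i) + n * ε)) * mgf (∑ i, X i) μ t := hchern
    _ ≤ exp (-t * ((∑ i, m i) + n * ε)) * exp (t * (∑ i, m i) + n * (t^2 / 8)) := by
        exact mul_le_mul_of_nonneg_left hprod (exp_pos _).le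
    _ = exp (-2 * n * ε^2) := hfin

theorem hoeffding_lower {Ω : Type*} [MeasurableSpace Ω] (μ : Measure Ω) [IsProbabilityMeasure μ]
    (n : ℕ) (X : Fin n → Ω → ℝ) (hmeas : ∀ i, Measurable (X i))
    (hindep : iIndepFun X μ)
    (hbd : ∀ i ω, X i ω ∈ Set.Icc (0:ℝ) 1) (ε : ℝ) (hε : 0 ≤ ε) :
    μ {ω | ∑ i, X i ω ≤ (∑ i, ∫ ω', X i ω' ∂μ) - n * ε} ≤
      ENNReal.ofReal (Real.exp (-2 * n * ε^2)) := by
  have hXint : ∀ i, Integrable (X i) μ := by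
    intro i
    refine Integrable.mono' (integrable_const 1) (hmeas i).aestronglyMeasurable
      (ae_of_all _ fun ω => ?_)
    rw [Real.norm_of_nonneg (hbd i ω).1]; exact (hbd i ω).2
  have key := hoeffding_upper μ n (fun i ω => 1 - X i ω)
    (fun i => measurable_const.sub (hmeas i))
    (hindep.comp (fun _ => fun x : ℝ => 1 - x) (fun _ => measurable_const.sub measurable_id))
    (fun i ω => ⟨by show (0:ℝ) ≤ 1 - X i ω; linarith [(hbd i ω).2],
      by show (1:ℝ) - X i ω ≤ 1; linarith [(hbd i ω).1]⟩) ε hε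
  have hmean : ∀ i, (∫ ω', (1 - X i ω') ∂μ) = 1 - ∫ ω', X i ω' ∂μ := by
    intro i
    rw [integral_sub (integrable_const 1) (hXint i)]
    simp
  have hset : {ω | (∑ i, ∫ ω', (1 - X i ω') ∂μ) + n * ε ≤ ∑ i : Fin n, (1 - X i ω)} =
      {ω | ∑ i, X i ω ≤ (∑ i, ∫ ω', X i ω' ∂μ) - n * ε} := by
    ext ω
    simp only [Set.mem_setOf_eq, hmean, Finset.sum_sub_distrib, Finset.sum_const,
      Finset.card_univ, Fintype.card_fin, nsmul_eq_mul, mul_one]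
    constructor <;> intro h <;> linarith
  rw [hset] at key
  exact key

lemma empCDF_nonneg {Ω : Type*} (n : ℕ) (X : Fin n → Ω → ℝ) (ω : Ω) (x : ℝ) :
    0 ≤ empCDF n X ω x := by
  unfold empCDF
  apply mul_nonneg (by positivity)
  apply Finset.sum_nonneg
  intro i _
  split <;> norm_num

lemma empCDF_le_one {Ω : Type*} (n : ℕ) (X : Fin n → Ω → ℝ) (ω : Ω) (x : ℝ) :
    empCDF n X ω x ≤ 1 := by
  unfold empCDF
  rcases Nat.eq_zero_or_pos n with h | h
  · simp [h]
  have hsum : ∑ i : Fin n, (if X i ω ≤ x then (1:ℝ) else 0) ≤ n := by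
    calc ∑ i : Fin n, (if X i ω ≤ x then (1:ℝ) else 0) ≤ ∑ _i : Fin n, (1:ℝ) := by
          apply Finset.sum_le_sum; intro i _; split <;> norm_num
      _ = n := by simp
  rw [inv_mul_le_iff₀ (by exact_mod_cast h), mul_one]
  exact hsum

lemma empCDF_mono {Ω : Type*} (n : ℕ) (X : Fin n → Ω → ℝ) (ω : Ω) :
    Monotone (empCDF n X ω) := by
  intro x y hxy
  unfold empCDF
  apply mul_le_mul_of_nonneg_left _ (by positivity)
  apply Finset.sum_le_sum
  intro i _
  by_cases h : X i ω ≤ x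
  · rw [if_pos h, if_pos (h.trans hxy)]
  · rw [if_neg h]; split <;> norm_num

lemma core_bracket {Ω : Type*} {n : ℕ} (As Bs : Fin n → Ω → ℝ) (ω : Ω)
    (q p ε ΦBq : ℝ)
    (hE1 : p - ε ≤ empCDF n As ω q)
    (hE2 : (n:ℝ)⁻¹ * ∑ i : Fin n, (if As i ω < q then (1:ℝ) else 0) < p + ε)
    (hE3 : ΦBq - ε ≤ empCDF n Bs ω q)
    (hE4 : empCDF n Bs ω q ≤ ΦBq + ε) :
    evalE (empCDF n Bs ω) (geninvE (fun x => empCDF n As ω x + ε) p) - ε ≤ ΦBq ∧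
    ΦBq ≤ evalE (empCDF n Bs ω) (geninvE (fun x => empCDF n As ω x - ε) p) + ε := by
  set eA := empCDF n As ω with heA
  set eB := empCDF n Bs ω with heB
  have hBdd_below : BddBelow (Set.range eB) := by
    refine ⟨0, ?_⟩
    rintro y ⟨x, rfl⟩
    exact empCDF_nonneg n Bs ω x
  have hBdd_above : BddAbove (Set.range eB) := by
    refine ⟨1, ?_⟩
    rintro y ⟨x, rfl⟩
    exact empCDF_le_one n Bs ω x
  constructor
  · -- upper quantile estimate side : evalE eB q̃₊ ≤ eB q ≤ ΦBq + ε
    set qp : EReal := geninvE (fun x => eA x + ε) p with hqp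
    have hqp_le : qp ≤ (q : EReal) := by
      apply sInf_le
      exact ⟨q, by simpa using (by linarith : p ≤ eA q + ε), rfl⟩
    have hqp_ne_top : qp ≠ ⊤ :=
      ne_of_lt (lt_of_le_of_lt hqp_le (EReal.coe_lt_top q))
    have hval : evalE eB qp ≤ eB q := by
      by_cases hbot : qp = ⊥
      · rw [hbot]
        unfold evalE
        rw [if_pos rfl]
        exact csInf_le hBdd_below ⟨q, rfl⟩
      · unfold evalE
        rw [if_neg hbot, if_neg hqp_ne_top]
        apply empCDF_mono
        have := EReal.toReal_le_toReal hqp_le hbot (EReal.coe_ne_top q)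
        simpa using this
    linarith
  · -- lower quantile estimate side : eB q ≤ evalE eB q̃₋
    set qm : EReal := geninvE (fun x => eA x - ε) p with hqm
    have hq_le : (q : EReal) ≤ qm := by
      apply le_sInf
      rintro b ⟨x, hx, rfl⟩
      simp only [Set.mem_setOf_eq] at hx
      have hqx : q ≤ x := by
        by_contra hlt
        push_neg at hlt
        have hle : eA x ≤ (n:ℝ)⁻¹ * ∑ i : Fin n, (if As i ω < q then (1:ℝ) else 0) := by
          rw [heA]
          unfold empCDF
          apply mul_le_mul_of_nonneg_left _ (by positivity)
          apply Finset.sum_le_sum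
          intro i _
          by_cases h : As i ω ≤ x
          · rw [if_pos h, if_pos (lt_of_le_of_lt h hlt)]
          · rw [if_neg h]; split <;> norm_num
        linarith
      show (q : EReal) ≤ (x : EReal)
      exact_mod_cast hqx
    have hval : eB q ≤ evalE eB qm := by
      have hne_bot : qm ≠ ⊥ := by
        intro h
        rw [h, le_bot_iff] at hq_le
        exact (EReal.coe_ne_bot q) hq_le
      by_cases htop : qm = ⊤
      · rw [htop]
        unfold evalE
        rw [if_neg (by simp), if_pos rfl]
        exact le_csSup hBdd_above ⟨q, rfl⟩
      · unfold evalE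
        rw [if_neg hne_bot, if_neg htop]
        apply empCDF_mono
        have := EReal.toReal_le_toReal hq_le (EReal.coe_ne_bot q) htop
        simpa using this
    linarith

lemma cdf_facts {Ω : Type*} [MeasurableSpace Ω] (μ : Measure Ω) [IsProbabilityMeasure μ]
    (A : Ω → ℝ) (hA : Measurable A) (ΦA : ℝ → ℝ)
    (hΦA : ∀ x : ℝ, ΦA x = (μ {ω | A ω ≤ x}).toReal)
    (hContA : Continuous ΦA) (p : ℝ) (hp : p ∈ Set.Ioo (0:ℝ) 1) :
    ΦA (geninv ΦA p) = p ∧ (μ {ω | A ω < geninv ΦA p}).toReal = p := by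
  set q := geninv ΦA p with hq
  set S := {x : ℝ | p ≤ ΦA x} with hS
  have hmono : Monotone ΦA := by
    intro x y hxy
    rw [hΦA x, hΦA y]
    exact ENNReal.toReal_mono (measure_ne_top μ _)
      (measure_mono (fun ω h => le_trans h hxy))
  have hSne : S.Nonempty := by
    have htop : Tendsto (μ ∘ fun k : ℕ => {ω | A ω ≤ (k:ℝ)}) atTop (𝓝 (μ Set.univ)) := by
      have hU : ⋃ k : ℕ, {ω | A ω ≤ (k:ℝ)} = Set.univ := by
        ext ω
        simp only [Set.mem_iUnion, Set.mem_setOf_eq, Set.mem_univ, iff_true]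
        exact exists_nat_ge (A ω)
      rw [← hU]
      refine tendsto_measure_iUnion_atTop fun i j hij ω h => ?_
      simp only [Set.mem_setOf_eq] at h ⊢
      exact le_trans h (Nat.cast_le.mpr hij)
    have h1 : Tendsto (fun k : ℕ => ΦA (k:ℝ)) atTop (𝓝 1) := by
      have := (ENNReal.tendsto_toReal (measure_ne_top μ Set.univ)).comp htop
      simp only [Function.comp_def, measure_univ, ENNReal.toReal_one] at this
      simpa [hΦA] using this
    obtain ⟨k, hk⟩ := (h1.eventually (eventually_ge_nhds hp.2)).exists
    exact ⟨(k:ℝ), hk⟩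
  have hSbdd : BddBelow S := by
    have hbot : Tendsto (fun k : ℕ => μ {ω | A ω ≤ -(k:ℝ)}) atTop (𝓝 0) := by
      have hI : ⋂ k : ℕ, {ω | A ω ≤ -(k:ℝ)} = ∅ := by
        ext ω
        simp only [Set.mem_iInter, Set.mem_setOf_eq, Set.mem_empty_iff_false, iff_false,
          not_forall]
        obtain ⟨k, hk⟩ := exists_nat_ge (-A ω + 1)
        exact ⟨k, fun (h : A ω ≤ -(k:ℝ)) => by linarith⟩
      have := tendsto_measure_iInter_atTop (μ := μ)
        (s := fun k : ℕ => {ω | A ω ≤ -(k:ℝ)})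
        (fun k => (hA measurableSet_Iic).nullMeasurableSet)
        (fun i j hij ω (h : A ω ≤ -(j:ℝ)) =>
          show A ω ≤ -(i:ℝ) by
            have : (i:ℝ) ≤ (j:ℝ) := Nat.cast_le.mpr hij
            linarith) ⟨0, measure_ne_top μ _⟩
      rw [hI] at this
      simpa [Function.comp_def] using this
    have h1 : Tendsto (fun k : ℕ => ΦA (-(k:ℝ))) atTop (𝓝 0) := by
      have := (ENNReal.tendsto_toReal (by simp : (0:ENNReal) ≠ ⊤)).comp hbot
      simpa [Function.comp_def, hΦA] using this
    obtain ⟨k, hk⟩ := (h1.eventually (eventually_lt_nhds hp.1)).exists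
    refine ⟨-(k:ℝ), fun x hx => ?_⟩
    by_contra hlt
    push_neg at hlt
    exact absurd (le_trans hx (hmono hlt.le)) (not_le.mpr hk)
  have hSclosed : IsClosed S := IsClosed.preimage hContA isClosed_Ici
  have hq_mem : q ∈ S := hSclosed.csInf_mem hSne hSbdd
  have hΦq_le : ΦA q ≤ p := by
    by_contra hgt
    push_neg at hgt
    have hev : ∀ᶠ x in 𝓝 q, p < ΦA x := hContA.continuousAt.eventually (eventually_gt_nhds hgt)
    obtain ⟨δ, hδpos, hδ⟩ := Metric.eventually_nhds_iff.mp hev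
    have hmem : q - δ/2 ∈ S := le_of_lt (hδ (by
      simp only [Real.dist_eq]
      rw [abs_of_nonpos (by linarith)]
      linarith))
    have h2 : q ≤ q - δ/2 := csInf_le hSbdd hmem
    linarith
  have hΦAq : ΦA q = p := le_antisymm hΦq_le hq_mem
  refine ⟨hΦAq, ?_⟩
  -- μ {A < q} = ofReal p
  set s : ℕ → Set Ω := fun k => {ω | A ω ≤ q - 1/(k+1)} with hsdef
  have hm : Monotone s := by
    intro i j hij ω h
    simp only [hsdef, Set.mem_setOf_eq] at h ⊢
    have h1 : (1:ℝ)/(j+1) ≤ 1/(i+1) := by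
      apply one_div_le_one_div_of_le (by positivity)
      exact_mod_cast by omega
    linarith
  have hU : ⋃ k, s k = {ω | A ω < q} := by
    ext ω
    simp only [hsdef, Set.mem_iUnion, Set.mem_setOf_eq]
    constructor
    · rintro ⟨k, hk⟩
      have : (0:ℝ) < 1/(k+1) := by positivity
      linarith
    · intro h
      obtain ⟨k, hk⟩ := exists_nat_one_div_lt (by linarith : (0:ℝ) < q - A ω)
      exact ⟨k, by linarith⟩
  have ht1 : Tendsto (μ ∘ s) atTop (𝓝 (μ {ω | A ω < q})) := by
    rw [← hU]
    exact tendsto_measure_iUnion_atTop hm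
  have hμs : ∀ k, (μ ∘ s) k = ENNReal.ofReal (ΦA (q - 1/(k+1))) := by
    intro k
    simp only [Function.comp_apply, hsdef]
    rw [hΦA, ENNReal.ofReal_toReal (measure_ne_top μ _)]
  have ht2 : Tendsto (μ ∘ s) atTop (𝓝 (ENNReal.ofReal p)) := by
    simp only [funext hμs]
    rw [← hΦAq]
    apply (ENNReal.continuous_ofReal.tendsto _).comp
    apply (hContA.tendsto q).comp
    have : Tendsto (fun k : ℕ => 1/((k:ℝ)+1)) atTop (𝓝 0) :=
      tendsto_one_div_add_atTop_nhds_zero_nat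
    have := tendsto_const_nhds.sub this (f := fun _ : ℕ => q)
    simpa using this
  have : μ {ω | A ω < q} = ENNReal.ofReal p := tendsto_nhds_unique ht1 ht2
  rw [this, ENNReal.toReal_ofReal hp.1.le]

lemma integral_ite_le {Ω : Type*} [MeasurableSpace Ω] (μ : Measure Ω) [IsProbabilityMeasure μ]
    (f : Ω → ℝ) (hf : Measurable f) (q : ℝ) :
    ∫ ω, (if f ω ≤ q then (1:ℝ) else 0) ∂μ = (μ {ω | f ω ≤ q}).toReal := by
  have heq : (fun ω => if f ω ≤ q then (1:ℝ) else 0) =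
      Set.indicator {ω | f ω ≤ q} (fun _ => (1:ℝ)) := by
    ext ω
    by_cases h : f ω ≤ q <;> simp [Set.indicator_apply, h]
  have hs : MeasurableSet {ω | f ω ≤ q} := hf measurableSet_Iic
  calc ∫ ω, (if f ω ≤ q then (1:ℝ) else 0) ∂μ
      = ∫ ω, Set.indicator {ω | f ω ≤ q} (fun _ => (1:ℝ)) ω ∂μ := by rw [heq]
    _ = (μ {ω | f ω ≤ q}).toReal • (1:ℝ) := integral_indicator_const (1:ℝ) hs
    _ = (μ {ω | f ω ≤ q}).toReal := by rw [smul_eq_mul, mul_one]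

lemma integral_ite_lt {Ω : Type*} [MeasurableSpace Ω] (μ : Measure Ω) [IsProbabilityMeasure μ]
    (f : Ω → ℝ) (hf : Measurable f) (q : ℝ) :
    ∫ ω, (if f ω < q then (1:ℝ) else 0) ∂μ = (μ {ω | f ω < q}).toReal := by
  have heq : (fun ω => if f ω < q then (1:ℝ) else 0) =
      Set.indicator {ω | f ω < q} (fun _ => (1:ℝ)) := by
    ext ω
    by_cases h : f ω < q <;> simp [Set.indicator_apply, h]
  have hs : MeasurableSet {ω | f ω < q} := hf measurableSet_Iio
  calc ∫ ω, (if f ω < q then (1:ℝ) else 0) ∂μ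
      = ∫ ω, Set.indicator {ω | f ω < q} (fun _ => (1:ℝ)) ω ∂μ := by rw [heq]
    _ = (μ {ω | f ω < q}).toReal • (1:ℝ) := integral_indicator_const (1:ℝ) hs
    _ = (μ {ω | f ω < q}).toReal := by rw [smul_eq_mul, mul_one]

lemma emp_tail_lower {Ω : Type*} [MeasurableSpace Ω] (μ : Measure Ω) [IsProbabilityMeasure μ]
    (n : ℕ) (hn : 0 < n) (f : Fin n → Ω → ℝ) (hmeas : ∀ i, Measurable (f i))
    (hindep : iIndepFun f μ)
    (q m ε : ℝ) (hm : ∀ i, (μ {ω | f i ω ≤ q}).toReal = m) (hε : 0 ≤ ε) :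
    μ {ω | empCDF n f ω q < m - ε} ≤ ENNReal.ofReal (Real.exp (-2 * n * ε^2)) := by
  have hn' : (0:ℝ) < n := by exact_mod_cast hn
  have hkey := hoeffding_lower μ n (fun i ω' => if f i ω' ≤ q then (1:ℝ) else 0)
    (fun i => Measurable.ite ((hmeas i) measurableSet_Iic) measurable_const measurable_const)
    (hindep.comp (fun _ => fun x : ℝ => if x ≤ q then (1:ℝ) else 0)
      (fun _ => Measurable.ite measurableSet_Iic measurable_const measurable_const))
    (fun i ω' => by rw [Set.mem_Icc]; split <;> norm_num) ε hε
  refine le_trans (measure_mono ?_) hkey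
  intro ω hω
  simp only [Set.mem_setOf_eq] at hω ⊢
  have hμsum : (∑ i, ∫ ω', (if f i ω' ≤ q then (1:ℝ) else 0) ∂μ) = n * m := by
    have : ∀ i : Fin n, (∫ ω', (if f i ω' ≤ q then (1:ℝ) else 0) ∂μ) = m := fun i => by
      rw [integral_ite_le μ (f i) (hmeas i) q]; exact hm i
    simp only [this, Finset.sum_const, Finset.card_univ, Fintype.card_fin, nsmul_eq_mul]
  rw [hμsum]
  have hS : empCDF n f ω q = (n:ℝ)⁻¹ * ∑ i, (if f i ω ≤ q then (1:ℝ) else 0) := rfl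
  rw [hS] at hω
  have h2 : (n:ℝ) * ((n:ℝ)⁻¹ * ∑ i, (if f i ω ≤ q then (1:ℝ) else 0))
      = ∑ i, (if f i ω ≤ q then (1:ℝ) else 0) := by field_simp
  nlinarith [mul_lt_mul_of_pos_left hω hn']

lemma emp_tail_upper {Ω : Type*} [MeasurableSpace Ω] (μ : Measure Ω) [IsProbabilityMeasure μ]
    (n : ℕ) (hn : 0 < n) (f : Fin n → Ω → ℝ) (hmeas : ∀ i, Measurable (f i))
    (hindep : iIndepFun f μ)
    (q m ε : ℝ) (hm : ∀ i, (μ {ω | f i ω ≤ q}).toReal = m) (hε : 0 ≤ ε) :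
    μ {ω | m + ε < empCDF n f ω q} ≤ ENNReal.ofReal (Real.exp (-2 * n * ε^2)) := by
  have hn' : (0:ℝ) < n := by exact_mod_cast hn
  have hkey := hoeffding_upper μ n (fun i ω' => if f i ω' ≤ q then (1:ℝ) else 0)
    (fun i => Measurable.ite ((hmeas i) measurableSet_Iic) measurable_const measurable_const)
    (hindep.comp (fun _ => fun x : ℝ => if x ≤ q then (1:ℝ) else 0)
      (fun _ => Measurable.ite measurableSet_Iic measurable_const measurable_const))
    (fun i ω' => by rw [Set.mem_Icc]; split <;> norm_num) ε hε
  refine le_trans (measure_mono ?_) hkey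
  intro ω hω
  simp only [Set.mem_setOf_eq] at hω ⊢
  have hμsum : (∑ i, ∫ ω', (if f i ω' ≤ q then (1:ℝ) else 0) ∂μ) = n * m := by
    have : ∀ i : Fin n, (∫ ω', (if f i ω' ≤ q then (1:ℝ) else 0) ∂μ) = m := fun i => by
      rw [integral_ite_le μ (f i) (hmeas i) q]; exact hm i
    simp only [this, Finset.sum_const, Finset.card_univ, Fintype.card_fin, nsmul_eq_mul]
  rw [hμsum]
  have hS : empCDF n f ω q = (n:ℝ)⁻¹ * ∑ i, (if f i ω ≤ q then (1:ℝ) else 0) := rfl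
  rw [hS] at hω
  have h2 : (n:ℝ) * ((n:ℝ)⁻¹ * ∑ i, (if f i ω ≤ q then (1:ℝ) else 0))
      = ∑ i, (if f i ω ≤ q then (1:ℝ) else 0) := by field_simp
  nlinarith [mul_lt_mul_of_pos_left hω hn']

lemma emp_lt_tail_upper {Ω : Type*} [MeasurableSpace Ω] (μ : Measure Ω) [IsProbabilityMeasure μ]
    (n : ℕ) (hn : 0 < n) (f : Fin n → Ω → ℝ) (hmeas : ∀ i, Measurable (f i))
    (hindep : iIndepFun f μ)
    (q m ε : ℝ) (hm : ∀ i, (μ {ω | f i ω < q}).toReal = m) (hε : 0 ≤ ε) :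
    μ {ω | m + ε ≤ (n:ℝ)⁻¹ * ∑ i : Fin n, (if f i ω < q then (1:ℝ) else 0)} ≤
      ENNReal.ofReal (Real.exp (-2 * n * ε^2)) := by
  have hn' : (0:ℝ) < n := by exact_mod_cast hn
  have hkey := hoeffding_upper μ n (fun i ω' => if f i ω' < q then (1:ℝ) else 0)
    (fun i => Measurable.ite ((hmeas i) measurableSet_Iio) measurable_const measurable_const)
    (hindep.comp (fun _ => fun x : ℝ => if x < q then (1:ℝ) else 0)
      (fun _ => Measurable.ite measurableSet_Iio measurable_const measurable_const))
    (fun i ω' => by rw [Set.mem_Icc]; split <;> norm_num) ε hε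
  refine le_trans (measure_mono ?_) hkey
  intro ω hω
  simp only [Set.mem_setOf_eq] at hω ⊢
  have hμsum : (∑ i, ∫ ω', (if f i ω' < q then (1:ℝ) else 0) ∂μ) = n * m := by
    have : ∀ i : Fin n, (∫ ω', (if f i ω' < q then (1:ℝ) else 0) ∂μ) = m := fun i => by
      rw [integral_ite_lt μ (f i) (hmeas i) q]; exact hm i
    simp only [this, Finset.sum_const, Finset.card_univ, Fintype.card_fin, nsmul_eq_mul]
  rw [hμsum]
  have h2 : (n:ℝ) * ((n:ℝ)⁻¹ * ∑ i, (if f i ω < q then (1:ℝ) else 0))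
      = ∑ i, (if f i ω < q then (1:ℝ) else 0) := by field_simp
  nlinarith [mul_le_mul_of_nonneg_left hω hn'.le]

end PRSRHelpers

/-- **PAC bound on the `p`-quantile relative scenario risk (Theorem 2 of the paper,
with union-bound confidence `1 - 2α`).** Let `A`, `B` be real random variables with
CDFs `ΦA` (continuous) and `ΦB`, let `{A_i}` be `n` i.i.d. samples with CDF `ΦA` and
`{B_i}` be `n` i.i.d. samples with CDF `ΦB`, with empirical CDFs `ΦA⁽ⁿ⁾`, `ΦB⁽ⁿ⁾`.
Let `p, α ∈ (0,1)` and `ε = √(ln(2/α)/(2n))`. Then, with probability at least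
`1 - 2α`, the `p`-quantile relative scenario risk
`R(p) = P(B > ΦA⁻¹(p) | A ≤ ΦA⁻¹(p))` satisfies
`1 - min p v̄ / p ≤ R(p) ≤ 1 - max (p + v̲ - 1) 0 / p`, where
`v̲ = ΦB⁽ⁿ⁾((ΦA⁽ⁿ⁾ + ε)⁻¹(p)) - ε` and `v̄ = ΦB⁽ⁿ⁾((ΦA⁽ⁿ⁾ - ε)⁻¹(p)) + ε`. -/
theorem pac_bound_p_rsr
    {Ω : Type*} [MeasurableSpace Ω] (μ : Measure Ω) [IsProbabilityMeasure μ]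
    (A B : Ω → ℝ) (hA : Measurable A) (hB : Measurable B)
    (ΦA ΦB : ℝ → ℝ)
    (hΦA : ∀ x : ℝ, ΦA x = (μ {ω | A ω ≤ x}).toReal)
    (hΦB : ∀ x : ℝ, ΦB x = (μ {ω | B ω ≤ x}).toReal)
    (hContA : Continuous ΦA)
    (n : ℕ) (hn : 0 < n) (As Bs : Fin n → Ω → ℝ)
    (hAsMeas : ∀ i, Measurable (As i)) (hBsMeas : ∀ i, Measurable (Bs i))
    (hAsIndep : ProbabilityTheory.iIndepFun As μ)
    (hBsIndep : ProbabilityTheory.iIndepFun Bs μ)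
    (hAsDist : ∀ (i : Fin n) (x : ℝ), (μ {ω | As i ω ≤ x}).toReal = ΦA x)
    (hBsDist : ∀ (i : Fin n) (x : ℝ), (μ {ω | Bs i ω ≤ x}).toReal = ΦB x)
    (p α ε : ℝ) (hp : p ∈ Set.Ioo (0:ℝ) 1) (hα : α ∈ Set.Ioo (0:ℝ) 1)
    (hε : ε = Real.sqrt (Real.log (2 / α) / (2 * n))) :
    ENNReal.ofReal (1 - 2 * α) ≤
      μ {ω |
        1 - min p (evalE (empCDF n Bs ω)
              (geninvE (fun x => empCDF n As ω x - ε) p) + ε) / p ≤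
            (μ {ω' | geninv ΦA p < B ω' ∧ A ω' ≤ geninv ΦA p}).toReal /
              (μ {ω' | A ω' ≤ geninv ΦA p}).toReal ∧
          (μ {ω' | geninv ΦA p < B ω' ∧ A ω' ≤ geninv ΦA p}).toReal /
              (μ {ω' | A ω' ≤ geninv ΦA p}).toReal ≤
            1 - max (p + (evalE (empCDF n Bs ω)
              (geninvE (fun x => empCDF n As ω x + ε) p) - ε) - 1) 0 / p} := by
  have hp0 : (0:ℝ) < p := hp.1
  have hn' : (0:ℝ) < (n:ℝ) := by exact_mod_cast hn
  have hlognn : 0 ≤ Real.log (2/α) := by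
    apply Real.log_nonneg
    rw [le_div_iff₀ hα.1]
    linarith [hα.2]
  have hεnn : 0 ≤ ε := by rw [hε]; positivity
  have hexp : Real.exp (-2 * n * ε^2) = α/2 := by
    rw [hε, Real.sq_sqrt (by positivity)]
    rw [show -2 * (n:ℝ) * (Real.log (2/α)/(2*(n:ℝ))) = - Real.log (2/α) by
      field_simp]
    rw [Real.exp_neg, Real.exp_log (div_pos two_pos hα.1), inv_div]
  set q : ℝ := geninv ΦA p with hqdef
  have hΦAq : ΦA q = p := (cdf_facts μ A hA ΦA hΦA hContA p hp).1
  have hPA : (μ {ω' | A ω' ≤ q}).toReal = p := by rw [← hΦA q]; exact hΦAq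
  have hPB : (μ {ω' | B ω' ≤ q}).toReal = ΦB q := (hΦB q).symm
  have hAsLE : ∀ i, (μ {ω' | As i ω' ≤ q}).toReal = p := fun i => by
    rw [hAsDist i q]; exact hΦAq
  have hAsLT : ∀ i, (μ {ω' | As i ω' < q}).toReal = p := fun i =>
    (cdf_facts μ (As i) (hAsMeas i) ΦA (fun x => (hAsDist i x).symm) hContA p hp).2
  have hBsLE : ∀ i, (μ {ω' | Bs i ω' ≤ q}).toReal = ΦB q := fun i => hBsDist i q
  -- splitting of the conditional probability
  have hmA : MeasurableSet {ω' | A ω' ≤ q} := hA measurableSet_Iic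
  have hmeas2 : MeasurableSet {ω' | B ω' ≤ q ∧ A ω' ≤ q} :=
    (hB measurableSet_Iic).inter hmA
  set J : ℝ := (μ {ω' | B ω' ≤ q ∧ A ω' ≤ q}).toReal with hJdef
  have hsetsplit : {ω' | A ω' ≤ q} =
      {ω' | q < B ω' ∧ A ω' ≤ q} ∪ {ω' | B ω' ≤ q ∧ A ω' ≤ q} := by
    ext ω'
    simp only [Set.mem_setOf_eq, Set.mem_union]
    constructor
    · intro h
      rcases lt_or_ge q (B ω') with h' | h'
      · exact Or.inl ⟨h', h⟩
      · exact Or.inr ⟨h', h⟩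
    · rintro (⟨_, h⟩ | ⟨_, h⟩) <;> exact h
  have hdisj : Disjoint {ω' | q < B ω' ∧ A ω' ≤ q} {ω' | B ω' ≤ q ∧ A ω' ≤ q} := by
    rw [Set.disjoint_left]
    rintro ω' ⟨h1, _⟩ ⟨h2, _⟩
    exact absurd h2 (not_le.mpr h1)
  have hsplit : (μ {ω' | q < B ω' ∧ A ω' ≤ q}).toReal = p - J := by
    have h := measure_union (μ := μ) hdisj hmeas2
    rw [← hsetsplit] at h
    have h' := congrArg ENNReal.toReal h
    rw [ENNReal.toReal_add (measure_ne_top μ _) (measure_ne_top μ _), hPA] at h'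
    rw [← hJdef] at h'
    linarith
  have hJ0 : 0 ≤ J := ENNReal.toReal_nonneg
  have hJp : J ≤ p := by
    rw [← hPA]
    exact ENNReal.toReal_mono (measure_ne_top μ _) (measure_mono fun ω' h => h.2)
  have hJB : J ≤ ΦB q := by
    rw [← hPB]
    exact ENNReal.toReal_mono (measure_ne_top μ _) (measure_mono fun ω' h => h.1)
  have hJlb : p + ΦB q - 1 ≤ J := by
    have hiu := measure_union_add_inter (μ := μ) {ω' | B ω' ≤ q} hmA
    have hinter : ({ω' | B ω' ≤ q} ∩ {ω' | A ω' ≤ q}) = {ω' | B ω' ≤ q ∧ A ω' ≤ q} := rfl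
    rw [hinter] at hiu
    have h' := congrArg ENNReal.toReal hiu
    rw [ENNReal.toReal_add (measure_ne_top μ _) (measure_ne_top μ _),
      ENNReal.toReal_add (measure_ne_top μ _) (measure_ne_top μ _), hPA, hPB, ← hJdef] at h'
    have hle1 : (μ ({ω' | B ω' ≤ q} ∪ {ω' | A ω' ≤ q})).toReal ≤ 1 := by
      have := ENNReal.toReal_mono (show (1:ENNReal) ≠ ⊤ by simp)
        (prob_le_one (μ := μ) (s := {ω' | B ω' ≤ q} ∪ {ω' | A ω' ≤ q}))
      simpa using this
    linarith
  -- the four good events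
  set E1 : Set Ω := {ω | p - ε ≤ empCDF n As ω q} with hE1def
  set E2 : Set Ω := {ω | (n:ℝ)⁻¹ * ∑ i : Fin n, (if As i ω < q then (1:ℝ) else 0) < p + ε}
    with hE2def
  set E3 : Set Ω := {ω | ΦB q - ε ≤ empCDF n Bs ω q} with hE3def
  set E4 : Set Ω := {ω | empCDF n Bs ω q ≤ ΦB q + ε} with hE4def
  have hsub : E1 ∩ E2 ∩ E3 ∩ E4 ⊆ {ω |
        1 - min p (evalE (empCDF n Bs ω)
              (geninvE (fun x => empCDF n As ω x - ε) p) + ε) / p ≤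
            (μ {ω' | q < B ω' ∧ A ω' ≤ q}).toReal /
              (μ {ω' | A ω' ≤ q}).toReal ∧
          (μ {ω' | q < B ω' ∧ A ω' ≤ q}).toReal /
              (μ {ω' | A ω' ≤ q}).toReal ≤
            1 - max (p + (evalE (empCDF n Bs ω)
              (geninvE (fun x => empCDF n As ω x + ε) p) - ε) - 1) 0 / p} := by
    rintro ω ⟨⟨⟨h1, h2⟩, h3⟩, h4⟩
    obtain ⟨hvlb, hvub⟩ := core_bracket As Bs ω q p ε (ΦB q) h1 h2 h3 h4
    simp only [Set.mem_setOf_eq]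
    rw [hsplit, hPA]
    have heq1 : (p - J)/p = 1 - J/p := by field_simp
    constructor
    · rw [heq1]
      have hminle : J ≤ min p (evalE (empCDF n Bs ω)
          (geninvE (fun x => empCDF n As ω x - ε) p) + ε) := le_min hJp (le_trans hJB hvub)
      have h6 := mul_le_mul_of_nonneg_right hminle (inv_nonneg.mpr hp0.le)
      rw [div_eq_mul_inv, div_eq_mul_inv]
      linarith
    · rw [heq1]
      have hmaxle : max (p + (evalE (empCDF n Bs ω)
          (geninvE (fun x => empCDF n As ω x + ε) p) - ε) - 1) 0 ≤ J :=
        max_le (by linarith) hJ0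
      have h6 := mul_le_mul_of_nonneg_right hmaxle (inv_nonneg.mpr hp0.le)
      rw [div_eq_mul_inv, div_eq_mul_inv]
      linarith
  -- probability of the bad events
  have hb1 : μ E1ᶜ ≤ ENNReal.ofReal (α/2) := by
    rw [← hexp]
    refine le_trans (measure_mono ?_) (emp_tail_lower μ n hn As hAsMeas hAsIndep q p ε hAsLE hεnn)
    intro ω hω
    simp only [hE1def, Set.mem_compl_iff, Set.mem_setOf_eq, not_le] at hω
    exact hω
  have hb2 : μ E2ᶜ ≤ ENNReal.ofReal (α/2) := by
    rw [← hexp]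
    refine le_trans (measure_mono ?_)
      (emp_lt_tail_upper μ n hn As hAsMeas hAsIndep q p ε hAsLT hεnn)
    intro ω hω
    simp only [hE2def, Set.mem_compl_iff, Set.mem_setOf_eq, not_lt] at hω
    exact hω
  have hb3 : μ E3ᶜ ≤ ENNReal.ofReal (α/2) := by
    rw [← hexp]
    refine le_trans (measure_mono ?_)
      (emp_tail_lower μ n hn Bs hBsMeas hBsIndep q (ΦB q) ε hBsLE hεnn)
    intro ω hω
    simp only [hE3def, Set.mem_compl_iff, Set.mem_setOf_eq, not_le] at hω
    exact hω
  have hb4 : μ E4ᶜ ≤ ENNReal.ofReal (α/2) := by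
    rw [← hexp]
    refine le_trans (measure_mono ?_)
      (emp_tail_upper μ n hn Bs hBsMeas hBsIndep q (ΦB q) ε hBsLE hεnn)
    intro ω hω
    simp only [hE4def, Set.mem_compl_iff, Set.mem_setOf_eq, not_le] at hω
    exact hω
  have hbadsum : μ ((E1 ∩ E2 ∩ E3 ∩ E4)ᶜ) ≤ ENNReal.ofReal (2*α) := by
    rw [Set.compl_inter, Set.compl_inter, Set.compl_inter]
    have hα2 : (0:ℝ) ≤ α/2 := by linarith [hα.1]
    calc μ (E1ᶜ ∪ E2ᶜ ∪ E3ᶜ ∪ E4ᶜ) ≤ μ (E1ᶜ ∪ E2ᶜ ∪ E3ᶜ) + μ E4ᶜ := measure_union_le _ _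
      _ ≤ (μ (E1ᶜ ∪ E2ᶜ) + μ E3ᶜ) + μ E4ᶜ := by
          gcongr
          exact measure_union_le _ _
      _ ≤ ((μ E1ᶜ + μ E2ᶜ) + μ E3ᶜ) + μ E4ᶜ := by
          gcongr
          exact measure_union_le _ _
      _ ≤ ((ENNReal.ofReal (α/2) + ENNReal.ofReal (α/2)) + ENNReal.ofReal (α/2))
            + ENNReal.ofReal (α/2) := by gcongr
      _ = ENNReal.ofReal (2*α) := by
          rw [← ENNReal.ofReal_add hα2 hα2, ← ENNReal.ofReal_add (by linarith) hα2,
            ← ENNReal.ofReal_add (by linarith) hα2]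
          congr 1
          ring
  have hgood : ENNReal.ofReal (1 - 2*α) ≤ μ (E1 ∩ E2 ∩ E3 ∩ E4) := by
    rcases le_or_gt (1 - 2*α) 0 with h | h
    · rw [ENNReal.ofReal_eq_zero.mpr h]
      exact zero_le
    · have huniv : (1:ENNReal) ≤ μ (E1 ∩ E2 ∩ E3 ∩ E4) + μ ((E1 ∩ E2 ∩ E3 ∩ E4)ᶜ) := by
        rw [← measure_univ (μ := μ), ← Set.union_compl_self (E1 ∩ E2 ∩ E3 ∩ E4)]
        exact measure_union_le _ _
      have h2 : (1:ENNReal) ≤ μ (E1 ∩ E2 ∩ E3 ∩ E4) + ENNReal.ofReal (2*α) :=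
        le_trans huniv (add_le_add_right hbadsum _)
      have h3 : ENNReal.ofReal (1 - 2*α) + ENNReal.ofReal (2*α) = 1 := by
        rw [← ENNReal.ofReal_add (by linarith) (by linarith [hα.1])]
        norm_num
      have h4 : ENNReal.ofReal (1 - 2*α) + ENNReal.ofReal (2*α) ≤
          μ (E1 ∩ E2 ∩ E3 ∩ E4) + ENNReal.ofReal (2*α) := by
        rw [h3]
        exact h2
      exact (ENNReal.add_le_add_iff_right ENNReal.ofReal_ne_top).mp h4
  exact le_trans hgood (measure_mono hsub)
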